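/- (ψ-Dobinski-like formula, formal version.) Suppose (n_ψ)_{n≥1} are positive reals such that ε(ψ,r) = Σ_{k≥r} (−1)^{k−r}/(k_ψ − r_ψ)! converges absolutely for each r (where (k_ψ − r_ψ)! denotes Π_{j=1}^{k−r} ((r+j)_ψ − r_ψ) suitably interpreted, specializing to ordinary factorials when n_ψ = n) and Σ_{r≥0} ε(ψ,r) r_ψ^n / r_ψ! converges. Then for the classical case n_ψ = n this gives B~_n(ψ) = Σ_{k=0}^n {n choose k}~_ψ = Σ_{r≥0} ε(ψ,r) r_ψ^n / r_ψ!, which reduces to the Dobinski formula B_n = e^{-1} Σ_{r≥0} r^n/r!. -/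

import Mathlib

open Finset

/-- ψ-Dobinski-like formula, classical specialization
`n_ψ = n`: with `ε(ψ,r) = ∑_{k≥r} (-1)^{k-r}/(k-r)!` one has
`B~_n(ψ) = ∑_{k=0}^n {n,k}ψ = ∑_{r≥0} ε(ψ,r) r_ψ^n / r_ψ!`, which reduces
to the Dobinski formula `B_n = e^{-1} ∑_{r≥0} r^n/r!`. -/
theorem psi_dobinski_classical_case
    (s : ℕ → ℝ) (hs : ∀ n : ℕ, s n = (n : ℝ))
    (sfact : ℕ → ℝ) (hsf0 : sfact 0 = 1)
    (hsf : ∀ n : ℕ, sfact (n + 1) = s (n + 1) * sfact n)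
    (St : ℕ → ℕ → ℝ)
    (hrec : ∀ n k : ℕ, 1 ≤ k → St (n + 1) k = St n (k - 1) + s k * St n k)
    (hdelta : ∀ n : ℕ, St n 0 = if n = 0 then 1 else 0)
    (hvanish : ∀ n k : ℕ, n < k → St n k = 0)
    (eps : ℕ → ℝ)
    (heps : ∀ r : ℕ, eps r = ∑' j : ℕ, (-1 : ℝ) ^ j / (j.factorial : ℝ)) :
    ∀ n : ℕ,
      ∑ k ∈ range (n + 1), St n k =
        ∑' r : ℕ, eps r * (s r) ^ n / sfact r := by
  have hsfact : ∀ n : ℕ, sfact n = (n.factorial : ℝ) := by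
    intro n
    induction n with
    | zero => simpa using hsf0
    | succ n ih =>
      rw [hsf n, hs, ih, Nat.factorial_succ]
      push_cast
      ring
  have hExp : ∀ x : ℝ, HasSum (fun n : ℕ => x ^ n / (n.factorial : ℝ)) (Real.exp x) := by
    intro x
    rw [Real.exp_eq_exp_ℝ]
    exact NormedSpace.expSeries_div_hasSum_exp x
  have hepsv : ∀ r : ℕ, eps r = Real.exp (-1) := by
    intro r
    rw [heps r, ← (hExp (-1)).tsum_eq]
  -- pointwise descFactorial identity
  have hdesc : ∀ r k : ℕ, ((r.descFactorial (k + 1) : ℝ)) + (k : ℝ) * (r.descFactorial k : ℝ)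
      = (r : ℝ) * (r.descFactorial k : ℝ) := by
    intro r k
    rcases le_or_gt k r with h | h
    · rw [Nat.descFactorial_succ]
      push_cast [h]
      ring
    · rw [Nat.descFactorial_eq_zero_iff_lt.2 h,
        Nat.descFactorial_eq_zero_iff_lt.2 (h.trans (Nat.lt_succ_self k))]
      simp
  -- key identity : r^n = ∑_{k=0}^n St n k * descFactorial r k
  have key : ∀ n r : ℕ, (r : ℝ) ^ n
      = ∑ k ∈ range (n + 1), St n k * (r.descFactorial k : ℝ) := by
    intro n
    induction n with
    | zero => intro r; simp [hdelta 0]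
    | succ n ih =>
      intro r
      have h0 : St (n + 1) 0 = 0 := by simp [hdelta (n + 1)]
      have hStep : ∀ k : ℕ, St (n + 1) (k + 1) = St n k + ((k : ℝ) + 1) * St n (k + 1) := by
        intro k
        rw [hrec n (k + 1) (Nat.le_add_left 1 k), hs (k + 1)]
        push_cast
        ring_nf
      have hB : (∑ k ∈ range (n + 1), (k : ℝ) * St n k * (r.descFactorial k : ℝ))
          = ∑ k ∈ range (n + 1), ((k : ℝ) + 1) * St n (k + 1) * (r.descFactorial (k + 1) : ℝ) := by
        have hF0 : ((0 : ℕ) : ℝ) * St n 0 * (r.descFactorial 0 : ℝ) = 0 := by simp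
        have hFn : ((n + 1 : ℕ) : ℝ) * St n (n + 1) * (r.descFactorial (n + 1) : ℝ) = 0 := by
          rw [hvanish n (n + 1) (Nat.lt_succ_self n)]; ring
        have := Finset.sum_range_succ'
          (fun k : ℕ => (k : ℝ) * St n k * (r.descFactorial k : ℝ)) (n + 1)
        rw [Finset.sum_range_succ
          (fun k : ℕ => (k : ℝ) * St n k * (r.descFactorial k : ℝ)) (n + 1)] at this
        simp only [hF0, hFn, add_zero, zero_add] at this
        rw [this]
        refine Finset.sum_congr rfl fun k _ => ?_
        push_cast
        ring
      calc (r : ℝ) ^ (n + 1) = (r : ℝ) * (r : ℝ) ^ n := by ring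
        _ = ∑ k ∈ range (n + 1),
              St n k * ((r.descFactorial (k + 1) : ℝ) + (k : ℝ) * (r.descFactorial k : ℝ)) := by
            rw [ih r, Finset.mul_sum]
            refine Finset.sum_congr rfl fun k _ => ?_
            rw [hdesc r k]
            ring
        _ = (∑ k ∈ range (n + 1), St n k * (r.descFactorial (k + 1) : ℝ))
            + ∑ k ∈ range (n + 1), (k : ℝ) * St n k * (r.descFactorial k : ℝ) := by
            rw [← Finset.sum_add_distrib]
            exact Finset.sum_congr rfl fun k _ => by ring
        _ = ∑ k ∈ range (n + 1), St (n + 1) (k + 1) * (r.descFactorial (k + 1) : ℝ) := by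
            rw [hB, ← Finset.sum_add_distrib]
            refine Finset.sum_congr rfl fun k _ => ?_
            rw [hStep k]
            ring
        _ = ∑ k ∈ range (n + 2), St (n + 1) k * (r.descFactorial k : ℝ) := by
            rw [Finset.sum_range_succ'
              (fun k : ℕ => St (n + 1) k * (r.descFactorial k : ℝ)) (n + 1), h0]
            simp
  -- ∑_r descFactorial r k / r! = e
  have hdescSum : ∀ k : ℕ,
      HasSum (fun r : ℕ => (r.descFactorial k : ℝ) / (r.factorial : ℝ)) (Real.exp 1) := by
    intro k
    have h1 : ∀ j : ℕ, ((j + k).descFactorial k : ℝ) / ((j + k).factorial : ℝ)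
        = 1 / (j.factorial : ℝ) := by
      intro j
      have h2 : (j.factorial * (j + k).descFactorial k : ℕ) = (j + k).factorial := by
        have := Nat.factorial_mul_descFactorial (Nat.le_add_left k j)
        simpa using this
      have hpos1 : (0 : ℝ) < ((j + k).factorial : ℝ) := by
        exact_mod_cast Nat.factorial_pos _
      have hpos2 : (0 : ℝ) < (j.factorial : ℝ) := by
        exact_mod_cast Nat.factorial_pos _
      rw [div_eq_div_iff hpos1.ne' hpos2.ne', one_mul, ← h2]
      push_cast
      ring
    have h3 : HasSum (fun j : ℕ => ((j + k).descFactorial k : ℝ) / ((j + k).factorial : ℝ))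
        (Real.exp 1) := by
      simp only [h1]
      simpa using hExp 1
    have h3' := (hasSum_nat_add_iff
      (f := fun r : ℕ => (r.descFactorial k : ℝ) / (r.factorial : ℝ)) k).mp h3
    have hzero : (∑ i ∈ range k, (i.descFactorial k : ℝ) / (i.factorial : ℝ)) = 0 := by
      refine Finset.sum_eq_zero fun i hi => ?_
      rw [Nat.descFactorial_eq_zero_iff_lt.2 (Finset.mem_range.1 hi)]
      simp
    rwa [hzero, add_zero] at h3'
  intro n
  have hterm : ∀ r : ℕ, eps r * (s r) ^ n / sfact r
      = ∑ k ∈ range (n + 1),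
          St n k * (Real.exp (-1) * ((r.descFactorial k : ℝ) / (r.factorial : ℝ))) := by
    intro r
    rw [hepsv r, hs r, hsfact r, key n r, Finset.mul_sum, Finset.sum_div]
    exact Finset.sum_congr rfl fun k _ => by ring
  have hk : ∀ k ∈ range (n + 1),
      HasSum (fun r : ℕ =>
        St n k * (Real.exp (-1) * ((r.descFactorial k : ℝ) / (r.factorial : ℝ)))) (St n k) := by
    intro k _
    have := ((hdescSum k).mul_left (Real.exp (-1))).mul_left (St n k)
    simpa [← Real.exp_add] using this
  rw [show (∑' r : ℕ, eps r * (s r) ^ n / sfact r)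
      = ∑' r : ℕ, ∑ k ∈ range (n + 1),
          St n k * (Real.exp (-1) * ((r.descFactorial k : ℝ) / (r.factorial : ℝ)))
    from tsum_congr hterm]
  exact (hasSum_sum hk).tsum_eq.symm
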